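/- Let X be a finite-dimensional real inner product space and let N ⊆ X be a nonempty compact set that is exhaustive, i.e., for every linear functional f : X → ℝ there exist x₊, x₋ ∈ N with f(x₊) ≥ 0 and f(x₋) ≤ 0. Then 0 belongs to the convex hull of N. -/

import Mathlib

/-- A set `N` is *exhaustive* if for every linear functional `f` there exist
elements `x₊, x₋ ∈ N` with `f x₊ ≥ 0` and `f x₋ ≤ 0`. -/
def IsExhaustive {X : Type*} [NormedAddCommGroup X] [InnerProductSpace ℝ X]
    (N : Set X) : Prop :=
  ∀ f : X →ₗ[ℝ] ℝ, (∃ x ∈ N, 0 ≤ f x) ∧ (∃ x ∈ N, f x ≤ 0)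

open Module in
lemma isCompact_convexHull_aux {X : Type*} [NormedAddCommGroup X] [InnerProductSpace ℝ X]
    [FiniteDimensional ℝ X] {N : Set X} (hne : N.Nonempty) (hcpt : IsCompact N) :
    IsCompact (convexHull ℝ N) := by
  obtain ⟨x₀, hx₀⟩ := hne
  set n := finrank ℝ X + 1 with hn
  have hφcont : Continuous (fun p : (Fin n → ℝ) × (Fin n → X) => ∑ i, p.1 i • p.2 i) := by
    exact continuous_finset_sum _ fun i _ =>
      ((continuous_apply i).comp continuous_fst).smul
        ((continuous_apply i).comp continuous_snd)
  have hS : IsCompact ((stdSimplex ℝ (Fin n)) ×ˢ (Set.univ.pi fun _ : Fin n => N)) :=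
    (isCompact_stdSimplex (𝕜 := ℝ) (ι := Fin n)).prod (isCompact_univ_pi fun _ => hcpt)
  have himg := hS.image hφcont
  convert himg using 1
  apply Set.Subset.antisymm
  · intro x hx
    obtain ⟨ι, _, z, w, hzs, hai, hwpos, hwsum, hx⟩ :=
      eq_pos_convex_span_of_mem_convexHull hx
    have hcard : Fintype.card ι ≤ n := by
      calc Fintype.card ι ≤ finrank ℝ (vectorSpan ℝ (Set.range z)) + 1 :=
            hai.card_le_finrank_succ
        _ ≤ n := by
            have := Submodule.finrank_le (vectorSpan ℝ (Set.range z))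
            omega
    obtain ⟨g⟩ : Nonempty (ι ↪ Fin n) := Function.Embedding.nonempty_of_card_le (by simpa [Fintype.card_fin] using hcard)
    classical
    set w' : Fin n → ℝ := fun j => if h : ∃ i, g i = j then w h.choose else 0 with hw'
    set z' : Fin n → X := fun j => if h : ∃ i, g i = j then z h.choose else x₀ with hz'
    have hgw : ∀ i, w' (g i) = w i := fun i => by
      have h : ∃ i', g i' = g i := ⟨i, rfl⟩
      simp only [hw', dif_pos h]
      rw [g.injective h.choose_spec]
    have hgz : ∀ i, z' (g i) = z i := fun i => by
      have h : ∃ i', g i' = g i := ⟨i, rfl⟩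
      simp only [hz', dif_pos h]
      rw [g.injective h.choose_spec]
    refine ⟨⟨w', z'⟩, ⟨?_, ?_⟩, ?_⟩
    · constructor
      · intro j
        by_cases h : ∃ i, g i = j
        · simp only [hw', dif_pos h]; exact (hwpos _).le
        · simp [hw', dif_neg h]
      · have : ∑ j, w' j = ∑ j ∈ Finset.univ.image g, w' j := by
          refine (Finset.sum_subset (Finset.subset_univ _) ?_).symm
          intro j _ hj
          have : ¬ ∃ i, g i = j := by
            intro ⟨i, hi⟩
            exact hj (Finset.mem_image.2 ⟨i, Finset.mem_univ i, hi⟩)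
          simp [hw', dif_neg this]
        rw [this, Finset.sum_image (fun a _ b _ h => g.injective h)]
        simp_rw [hgw]
        exact hwsum
    · intro j _
      by_cases h : ∃ i, g i = j
      · simp only [hz', dif_pos h]
        exact hzs ⟨h.choose, rfl⟩
      · simp only [hz', dif_neg h]; exact hx₀
    · have : ∑ j, w' j • z' j = ∑ j ∈ Finset.univ.image g, w' j • z' j := by
        refine (Finset.sum_subset (Finset.subset_univ _) ?_).symm
        intro j _ hj
        have : ¬ ∃ i, g i = j := by
          intro ⟨i, hi⟩
          exact hj (Finset.mem_image.2 ⟨i, Finset.mem_univ i, hi⟩)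
        simp [hw', dif_neg this]
      simp only []
      rw [this, Finset.sum_image (fun a _ b _ h => g.injective h)]
      simp_rw [hgw, hgz]
      exact hx
  · rintro x ⟨⟨w, z⟩, ⟨⟨hw0, hw1⟩, hz⟩, rfl⟩
    exact (convex_convexHull ℝ N).sum_mem (fun i _ => hw0 i) hw1
      (fun i _ => subset_convexHull ℝ N (hz i (Set.mem_univ i)))

/-- **Lemma 1.** If `N` is a nonempty compact exhaustive subset of a
finite-dimensional real inner product space, then `0 ∈ conv N`. -/
theorem zero_mem_convexHull_of_exhaustive
    {X : Type*} [NormedAddCommGroup X] [InnerProductSpace ℝ X]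
    [FiniteDimensional ℝ X]
    (N : Set X) (hne : N.Nonempty) (hcpt : IsCompact N)
    (hex : IsExhaustive N) :
    (0 : X) ∈ convexHull ℝ N := by
  by_contra h0
  have hconv : IsCompact (convexHull ℝ N) := isCompact_convexHull_aux hne hcpt
  obtain ⟨f, u, hfu, hf⟩ := geometric_hahn_banach_point_closed
    (convex_convexHull ℝ N) hconv.isClosed h0
  obtain ⟨-, x, hxN, hx⟩ := hex f.toLinearMap
  have hu : u < f x := hf x (subset_convexHull ℝ N hxN)
  simp only [map_zero] at hfu
  exact absurd hx (by simpa using (hfu.trans hu))
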